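/- Let t ≥ 2 be an integer and let T be the complete full t-ary tree of depth 2 (with l = t^2 leaves). Then the local antimagic chromatic number of T satisfies χ_la(T) ≤ l + 2. -/

import Mathlib

/-- The complete full `t`-ary tree of depth `n`, on vertex set
`Fin (1 + t + t² + ⋯ + tⁿ)` with heap-style indexing: the children of the vertex `u`
are the vertices `t*u + 1, t*u + 2, ..., t*u + t`. Vertex `0` is the root and the
vertices of index at least `1 + t + ⋯ + t^(n-1)` are the `tⁿ` leaves, all at depth
`n`. -/
def completeFullTaryTree (t n : ℕ) :
    SimpleGraph (Fin (∑ i ∈ Finset.range (n + 1), t ^ i)) where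
  Adj u v := ∃ j : Fin t,
    v.val = t * u.val + 1 + j.val ∨ u.val = t * v.val + 1 + j.val
  symm := by
    constructor
    rintro u v ⟨j, h⟩
    exact ⟨j, h.symm⟩
  loopless := by
    constructor
    rintro v ⟨j, h⟩
    have hv : v.val ≤ t * v.val := Nat.le_mul_of_pos_left _ j.pos
    rcases h with h | h <;> omega

instance (t n : ℕ) : DecidableRel (completeFullTaryTree t n).Adj := by
  unfold completeFullTaryTree
  intro u v
  exact inferInstanceAs (Decidable (∃ j : Fin t, _ ∨ _))

/-- The finset of edges of `G` incident to the vertex `v`. -/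
def SimpleGraph.incidentEdgeFinset {V : Type*} [Fintype V] [DecidableEq V]
    (G : SimpleGraph V) [DecidableRel G.Adj] (v : V) : Finset (Sym2 V) :=
  G.edgeFinset.filter (fun e => v ∈ e)

/-- The vertex sum (induced color) at `v` of an edge labeling `f`. -/
def SimpleGraph.vertexSum {V : Type*} [Fintype V] [DecidableEq V]
    (G : SimpleGraph V) [DecidableRel G.Adj] (f : Sym2 V → ℤ) (v : V) : ℤ :=
  ∑ e ∈ G.incidentEdgeFinset v, f e

/-- `f` is a local antimagic labeling of `G`: it restricts to a bijection from the edge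
set of `G` onto `{1, 2, ..., |E|}`, and adjacent vertices get distinct vertex sums. -/
def SimpleGraph.IsLocalAntimagicLabeling {V : Type*} [Fintype V] [DecidableEq V]
    (G : SimpleGraph V) [DecidableRel G.Adj] (f : Sym2 V → ℤ) : Prop :=
  Set.BijOn f ↑G.edgeFinset (Set.Icc 1 (G.edgeFinset.card : ℤ)) ∧
  ∀ u v : V, G.Adj u v → G.vertexSum f u ≠ G.vertexSum f v

/-- The number of distinct vertex sums (colors) induced by the labeling `f`. -/
def SimpleGraph.sumColorCount {V : Type*} [Fintype V] [DecidableEq V]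
    (G : SimpleGraph V) [DecidableRel G.Adj] (f : Sym2 V → ℤ) : ℕ :=
  (Finset.univ.image (G.vertexSum f)).card

/-- The local antimagic chromatic number of `G`: the least number of colors over all
colorings induced by local antimagic labelings of `G`. -/
noncomputable def SimpleGraph.localAntimagicChromaticNumber {V : Type*} [Fintype V]
    [DecidableEq V] (G : SimpleGraph V) [DecidableRel G.Adj] : ℕ :=
  sInf {c | ∃ f : Sym2 V → ℤ, G.IsLocalAntimagicLabeling f ∧ G.sumColorCount f = c}


namespace LAMaux

def rho (t i : ℕ) : ℕ := if i ≤ t / 2 then i + t / 2 else i - t / 2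
def tau (t i : ℕ) : ℕ := if i ≤ t / 2 then t + 2 - 2 * i else 2 * t + 1 - 2 * i
def sig (t j i : ℕ) : ℕ :=
  if j < (t - 1) / 2 then i
  else if j < t - 2 ∨ t % 2 = 1 then t + 1 - i
  else if j = t - 2 then tau t i
  else rho t i
def lab (t c : ℕ) : ℕ :=
  if c ≤ t then c else t + ((c - 1) % t) * t + sig t ((c - 1) % t) ((c - 1) / t)
lemma sig_mem {t i : ℕ} (ht : 2 ≤ t) (h1 : 1 ≤ i) (h2 : i ≤ t) (j : ℕ) :
    1 ≤ sig t j i ∧ sig t j i ≤ t := by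
  unfold sig tau rho; split_ifs <;> omega
lemma sig_inj {t i i' : ℕ} (ht : 2 ≤ t) (h1 : 1 ≤ i) (h2 : i ≤ t)
    (h1' : 1 ≤ i') (h2' : i' ≤ t) (j : ℕ) (h : sig t j i = sig t j i') : i = i' := by
  unfold sig tau rho at h; split_ifs at h <;> omega
lemma lab_small {t c : ℕ} (h : c ≤ t) : lab t c = c := if_pos h
lemma lab_child {t i j : ℕ} (ht : 2 ≤ t) (h1 : 1 ≤ i) (h2 : i ≤ t) (hj : j < t) :
    lab t (t * i + 1 + j) = t + j * t + sig t j i := by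
  have hc : ¬ (t * i + 1 + j ≤ t) := by nlinarith
  have hm : (t * i + 1 + j - 1) % t = j := by
    have : t * i + 1 + j - 1 = t * i + j := by omega
    rw [this, Nat.mul_add_mod, Nat.mod_eq_of_lt hj]
  have hd : (t * i + 1 + j - 1) / t = i := by
    have : t * i + 1 + j - 1 = t * i + j := by omega
    rw [this, Nat.mul_add_div (by omega), Nat.div_eq_of_lt hj, Nat.add_zero]
  rw [lab, if_neg hc, hm, hd]

-- new part
lemma child_decomp {t c : ℕ} (ht : 2 ≤ t) (h1 : t + 1 ≤ c) (h2 : c ≤ t * t + t) :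
    1 ≤ (c - 1) / t ∧ (c - 1) / t ≤ t ∧ (c - 1) % t < t ∧
      c = t * ((c - 1) / t) + 1 + (c - 1) % t := by
  set i := (c - 1) / t with hi
  set j := (c - 1) % t with hj
  have hdm : t * i + j = c - 1 := Nat.div_add_mod (c - 1) t
  have hjt : j < t := Nat.mod_lt _ (by omega)
  have hi1 : 1 ≤ i := by
    rcases Nat.eq_zero_or_pos i with h | h
    · rw [h] at hdm; omega
    · exact h
  have hit : i ≤ t := by
    by_contra hcon
    have hle : t * (t + 1) ≤ t * i := Nat.mul_le_mul_left t (by omega)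
    have hr : t * (t + 1) = t * t + t := by ring
    have hc1 : c - 1 + 1 = c := by omega
    linarith
  exact ⟨hi1, hit, hjt, by omega⟩

lemma blocks {t j s j' s' : ℕ} (hs : 1 ≤ s) (hst : s ≤ t) (hs' : 1 ≤ s') (hst' : s' ≤ t)
    (h : j * t + s = j' * t + s') : j = j' ∧ s = s' := by
  have hjj : j = j' := by
    rcases Nat.lt_trichotomy j j' with hlt | heq | hgt
    · have : (j + 1) * t ≤ j' * t := Nat.mul_le_mul_right t (by omega)
      have h2 : j * t + t ≤ j' * t := by nlinarith
      linarith
    · exact heq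
    · have : (j' + 1) * t ≤ j * t := Nat.mul_le_mul_right t (by omega)
      have h2 : j' * t + t ≤ j * t := by nlinarith
      linarith
  subst hjj
  exact ⟨rfl, by omega⟩

lemma lab_big {t c : ℕ} (ht : 2 ≤ t) (h1 : t + 1 ≤ c) (h2 : c ≤ t * t + t) :
    t + 1 ≤ lab t c ∧ lab t c ≤ t * t + t := by
  obtain ⟨hi1, hit, hjt, hc⟩ := child_decomp ht h1 h2
  set i := (c - 1) / t
  set j := (c - 1) % t
  rw [hc, lab_child ht hi1 hit hjt]
  obtain ⟨hσ1, hσ2⟩ := sig_mem ht hi1 hit j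
  constructor
  · omega
  · have : j * t ≤ (t - 1) * t := Nat.mul_le_mul_right t (by omega)
    nlinarith

lemma lab_mem {t c : ℕ} (ht : 2 ≤ t) (h1 : 1 ≤ c) (h2 : c ≤ t * t + t) :
    1 ≤ lab t c ∧ lab t c ≤ t * t + t := by
  rcases le_or_gt c t with h | h
  · rw [lab_small h]; constructor <;> nlinarith
  · have := lab_big ht (by omega) h2; omega

lemma lab_injOn {t : ℕ} (ht : 2 ≤ t) : ∀ c ∈ Finset.Icc 1 (t * t + t),
    ∀ c' ∈ Finset.Icc 1 (t * t + t), lab t c = lab t c' → c = c' := by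
  intro c hc c' hc' h
  simp only [Finset.mem_Icc] at hc hc'
  rcases le_or_gt c t with h1 | h1 <;> rcases le_or_gt c' t with h2 | h2
  · rwa [lab_small h1, lab_small h2] at h
  · exfalso
    rw [lab_small h1] at h
    have := (lab_big ht (by omega) hc'.2).1
    omega
  · exfalso
    rw [lab_small h2] at h
    have := (lab_big ht (by omega) hc.2).1
    omega
  · obtain ⟨hi1, hit, hjt, hceq⟩ := child_decomp ht (by omega) hc.2
    obtain ⟨hi1', hit', hjt', hceq'⟩ := child_decomp ht (by omega) hc'.2
    rw [hceq, hceq'] at h ⊢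
    rw [lab_child ht hi1 hit hjt, lab_child ht hi1' hit' hjt'] at h
    have h' : (c - 1) % t * t + sig t ((c - 1) % t) ((c - 1) / t)
        = (c' - 1) % t * t + sig t ((c' - 1) % t) ((c' - 1) / t) := by omega
    obtain ⟨hjj, hss⟩ := blocks (sig_mem ht hi1 hit _).1 (sig_mem ht hi1 hit _).2
      (sig_mem ht hi1' hit' _).1 (sig_mem ht hi1' hit' _).2 h'
    rw [hjj] at hss ⊢
    rw [sig_inj ht hi1 hit hi1' hit' _ hss]

lemma lab_image {t : ℕ} (ht : 2 ≤ t) :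
    (Finset.Icc 1 (t * t + t)).image (lab t) = Finset.Icc 1 (t * t + t) := by
  apply Finset.eq_of_subset_of_card_le
  · intro x hx
    simp only [Finset.mem_image] at hx
    obtain ⟨c, hc, rfl⟩ := hx
    simp only [Finset.mem_Icc] at hc ⊢
    exact lab_mem ht hc.1 hc.2
  · rw [Finset.card_image_of_injOn (by intro a ha b hb hab; exact lab_injOn ht a ha b hb hab)]



lemma sig_sum_odd {t : ℕ} (ht : 2 ≤ t) (hodd : t % 2 = 1) (i : ℕ) :
    ∑ j ∈ Finset.range t, sig t j i = ((t - 1) / 2) * i + ((t + 1) / 2) * (t + 1 - i) := by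
  set a := (t - 1) / 2 with ha
  have hat : a ≤ t := by omega
  rw [Finset.range_eq_Ico, ← Finset.sum_Ico_consecutive _ (Nat.zero_le a) hat]
  have h1 : ∑ j ∈ Finset.Ico 0 a, sig t j i = a * i := by
    have e : ∑ j ∈ Finset.Ico 0 a, sig t j i = ∑ _j ∈ Finset.Ico 0 a, i :=
      Finset.sum_congr rfl (fun j hj => by
        simp only [Finset.mem_Ico] at hj
        exact if_pos hj.2)
    rw [e, Finset.sum_const, Nat.card_Ico, smul_eq_mul, Nat.sub_zero]
  have h2 : ∑ j ∈ Finset.Ico a t, sig t j i = ((t + 1) / 2) * (t + 1 - i) := by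
    have e : ∑ j ∈ Finset.Ico a t, sig t j i = ∑ _j ∈ Finset.Ico a t, (t + 1 - i) :=
      Finset.sum_congr rfl (fun j hj => by
        simp only [Finset.mem_Ico] at hj
        rw [sig, if_neg (by omega), if_pos (Or.inr hodd)])
    rw [e, Finset.sum_const, Nat.card_Ico, smul_eq_mul]
    congr 1
    omega
  rw [h1, h2]

lemma sig_sum_even {t : ℕ} (ht : 2 ≤ t) (heven : t % 2 = 0) (i : ℕ) :
    ∑ j ∈ Finset.range t, sig t j i
      = ((t - 1) / 2) * i + ((t - 1) / 2) * (t + 1 - i) + tau t i + rho t i := by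
  set a := (t - 1) / 2 with ha
  have hat : a ≤ t - 2 := by omega
  rw [Finset.range_eq_Ico, ← Finset.sum_Ico_consecutive _ (Nat.zero_le (t-2)) (by omega : t - 2 ≤ t),
    ← Finset.sum_Ico_consecutive _ (Nat.zero_le a) hat]
  have h1 : ∑ j ∈ Finset.Ico 0 a, sig t j i = a * i := by
    have e : ∑ j ∈ Finset.Ico 0 a, sig t j i = ∑ _j ∈ Finset.Ico 0 a, i :=
      Finset.sum_congr rfl (fun j hj => by
        simp only [Finset.mem_Ico] at hj
        exact if_pos hj.2)
    rw [e, Finset.sum_const, Nat.card_Ico, smul_eq_mul, Nat.sub_zero]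
  have h2 : ∑ j ∈ Finset.Ico a (t - 2), sig t j i = a * (t + 1 - i) := by
    have e : ∑ j ∈ Finset.Ico a (t - 2), sig t j i = ∑ _j ∈ Finset.Ico a (t - 2), (t + 1 - i) :=
      Finset.sum_congr rfl (fun j hj => by
        simp only [Finset.mem_Ico] at hj
        rw [sig, if_neg (by omega), if_pos (Or.inl hj.2)])
    rw [e, Finset.sum_const, Nat.card_Ico, smul_eq_mul]
    congr 1
    omega
  have hpair : Finset.Ico (t - 2) t = {t - 2, t - 1} := by
    ext x; simp only [Finset.mem_Ico, Finset.mem_insert, Finset.mem_singleton]; omega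
  have h3 : ∑ j ∈ Finset.Ico (t - 2) t, sig t j i = tau t i + rho t i := by
    rw [hpair, Finset.sum_pair (by omega : t - 2 ≠ t - 1)]
    have e1 : sig t (t - 2) i = tau t i := by
      rw [sig, if_neg (by omega), if_neg (by omega), if_pos rfl]
    have e2 : sig t (t - 1) i = rho t i := by
      rw [sig, if_neg (by omega), if_neg (by omega), if_neg (by omega)]
    rw [e1, e2]
  rw [h1, h2, h3]
  ring

lemma mid_two {t i : ℕ} (ht : 2 ≤ t) (h1 : 1 ≤ i) (h2 : i ≤ t) :
    i + ∑ j ∈ Finset.range t, sig t j i = 1 + ∑ j ∈ Finset.range t, sig t j 1 ∨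
    i + ∑ j ∈ Finset.range t, sig t j i = t + ∑ j ∈ Finset.range t, sig t j t := by
  rcases Nat.mod_two_eq_zero_or_one t with heven | hodd
  · have comb : ∀ x, 1 ≤ x → x ≤ t →
        ((t - 1) / 2) * x + ((t - 1) / 2) * (t + 1 - x) = ((t - 1) / 2) * (t + 1) := by
      intro x hx1 hx2
      rw [← Nat.mul_add]
      congr 1
      omega
    rcases le_or_gt i (t / 2) with hle | hgt
    · left
      rw [sig_sum_even ht heven i, sig_sum_even ht heven 1]
      have key : i + tau t i + rho t i = 1 + tau t 1 + rho t 1 := by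
        unfold tau rho; split_ifs <;> omega
      have c1 := comb i h1 h2
      have c2 := comb 1 (le_refl 1) (by omega)
      linarith
    · right
      rw [sig_sum_even ht heven i, sig_sum_even ht heven t]
      have key : i + tau t i + rho t i = t + tau t t + rho t t := by
        unfold tau rho; split_ifs <;> omega
      have c1 := comb i h1 h2
      have c2 := comb t (by omega) (le_refl t)
      linarith
  · left
    rw [sig_sum_odd ht hodd i, sig_sum_odd ht hodd 1]
    obtain ⟨s, rfl⟩ : ∃ s, t = 2 * s + 1 := ⟨t / 2, by omega⟩
    rw [show (2 * s + 1 - 1) / 2 = s from by omega, show (2 * s + 1 + 1) / 2 = s + 1 from by omega]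
    rw [show 2 * s + 1 + 1 - 1 = 2 * s + 1 from by omega]
    zify [show i ≤ 2 * s + 1 + 1 from by omega]
    ring

lemma sig_sum_ge {t i : ℕ} (ht : 2 ≤ t) (h1 : 1 ≤ i) (h2 : i ≤ t) :
    t ≤ ∑ j ∈ Finset.range t, sig t j i := by
  have hmem : ∀ j ∈ Finset.range t, 1 ≤ sig t j i := by
    intro j _
    rw [sig, tau, rho]
    split_ifs <;> omega
  have := Finset.card_nsmul_le_sum (Finset.range t) (fun j => sig t j i) 1 hmem
  simpa using this


end LAMaux

namespace LAMaux

lemma Nval (t : ℕ) : (∑ i ∈ Finset.range (2 + 1), t ^ i) = t * t + t + 1 := by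
  rw [Finset.sum_range_succ, Finset.sum_range_succ, Finset.sum_range_one]
  ring

abbrev Vt (t : ℕ) := Fin (∑ i ∈ Finset.range (2 + 1), t ^ i)

def mkv (t x : ℕ) (h : x ≤ t * t + t) : Vt t := ⟨x, by rw [Nval]; exact Nat.lt_succ_of_le h⟩

@[simp] lemma mkv_val (t x : ℕ) (h : x ≤ t * t + t) : (mkv t x h).1 = x := rfl

lemma val_le {t : ℕ} (v : Vt t) : v.1 ≤ t * t + t := by
  have h2 : v.1 < t * t + t + 1 := by rw [← Nval t]; exact v.2
  exact Nat.lt_succ_iff.mp h2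

def fl (t : ℕ) : Sym2 (Vt t) → ℤ :=
  Sym2.lift ⟨fun a b => (lab t (max a.1 b.1) : ℤ), fun a b => by dsimp only; rw [Nat.max_comm]⟩

@[simp] lemma fl_mk (t : ℕ) (a b : Vt t) : fl t s(a, b) = (lab t (max a.1 b.1) : ℤ) := rfl

lemma adj_iff {t : ℕ} (ht : 2 ≤ t) (u v : Vt t) :
    (completeFullTaryTree t 2).Adj u v ↔
      (1 ≤ v.1 ∧ u.1 = (v.1 - 1) / t) ∨ (1 ≤ u.1 ∧ v.1 = (u.1 - 1) / t) := by
  have hdiv : ∀ a b : ℕ, b < t → (t * a + 1 + b - 1) / t = a := by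
    intro a b hb
    rw [show t * a + 1 + b - 1 = t * a + b from by generalize t * a = q; omega,
      Nat.mul_add_div (by omega), Nat.div_eq_of_lt hb, Nat.add_zero]
  have hone : ∀ a b : ℕ, 1 ≤ t * a + 1 + b := by
    intro a b
    have : 1 ≤ t * a + 1 := Nat.le_add_left 1 _
    exact le_trans this (Nat.le_add_right _ _)
  constructor
  · rintro ⟨j, h | h⟩
    · left
      exact ⟨by rw [h]; exact hone _ _, by rw [h, hdiv _ _ j.2]⟩
    · right
      exact ⟨by rw [h]; exact hone _ _, by rw [h, hdiv _ _ j.2]⟩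
  · have key : ∀ a b : Vt t, 1 ≤ b.1 → a.1 = (b.1 - 1) / t →
        ∃ j : ℕ, j < t ∧ b.1 = t * a.1 + 1 + j := by
      intro a b h1 h2
      refine ⟨(b.1 - 1) % t, Nat.mod_lt _ (by omega), ?_⟩
      have hdm := Nat.div_add_mod (b.1 - 1) t
      rw [h2]
      set q := t * ((b.1 - 1) / t) with hq
      omega
    rintro (⟨h1, h2⟩ | ⟨h1, h2⟩)
    · obtain ⟨j, hj, he⟩ := key u v h1 h2
      exact ⟨⟨j, hj⟩, Or.inl he⟩
    · obtain ⟨j, hj, he⟩ := key v u h1 h2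
      exact ⟨⟨j, hj⟩, Or.inr he⟩

lemma incident_image {V : Type*} [Fintype V] [DecidableEq V] (G : SimpleGraph V)
    [DecidableRel G.Adj] (v : V) :
    G.incidentEdgeFinset v = (G.neighborFinset v).image (fun w => s(v, w)) := by
  ext e
  induction e using Sym2.ind with
  | _ x y =>
    simp only [SimpleGraph.incidentEdgeFinset, Finset.mem_filter, SimpleGraph.mem_edgeFinset,
      SimpleGraph.mem_edgeSet, Finset.mem_image, SimpleGraph.mem_neighborFinset, Sym2.mem_iff]
    constructor
    · rintro ⟨hadj, hv | hv⟩
      · exact ⟨y, by rw [hv]; exact hadj, by rw [hv]⟩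
      · exact ⟨x, by rw [hv]; exact hadj.symm, by rw [hv]; exact Sym2.eq_swap⟩
    · rintro ⟨w, hadj, he⟩
      rcases Sym2.eq_iff.mp he with ⟨hvx, hwy⟩ | ⟨hvy, hwx⟩
      · subst hvx; subst hwy; exact ⟨hadj, Or.inl rfl⟩
      · subst hvy; subst hwx; exact ⟨hadj.symm, Or.inr rfl⟩

lemma vsum_nbr {V : Type*} [Fintype V] [DecidableEq V] (G : SimpleGraph V)
    [DecidableRel G.Adj] (f : Sym2 V → ℤ) (v : V) :
    G.vertexSum f v = ∑ w ∈ G.neighborFinset v, f s(v, w) := by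
  rw [SimpleGraph.vertexSum, SimpleGraph.incidentEdgeFinset, ← SimpleGraph.incidentEdgeFinset,
    incident_image, Finset.sum_image]
  intro a _ b _ h
  exact Sym2.congr_right.mp h

def child0 (t : ℕ) (j : Fin t) : Vt t :=
  mkv t (1 + j.1) (le_trans (by have := j.2; omega) (Nat.le_add_left t (t * t)))

def childm (t i : ℕ) (hi : i ≤ t) (j : Fin t) : Vt t :=
  mkv t (t * i + 1 + j.1) (by
    have h1 : t * i ≤ t * t := Nat.mul_le_mul_left t hi
    have h2 := j.2
    linarith)

lemma nbr_root {t : ℕ} (ht : 2 ≤ t) :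
    (completeFullTaryTree t 2).neighborFinset (mkv t 0 (Nat.zero_le _)) =
      Finset.image (child0 t) Finset.univ := by
  ext w
  rw [SimpleGraph.mem_neighborFinset, adj_iff ht]
  simp only [Finset.mem_image, Finset.mem_univ, true_and, mkv_val]
  constructor
  · rintro (⟨h1, h2⟩ | ⟨h1, _⟩)
    · have hw : w.1 - 1 < t := by
        by_contra hcon
        have : 1 ≤ (w.1 - 1) / t := (Nat.one_le_div_iff (by omega)).mpr (by omega)
        omega
      refine ⟨⟨w.1 - 1, hw⟩, ?_⟩
      apply Fin.ext
      show 1 + (w.1 - 1) = w.1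
      omega
    · omega
  · rintro ⟨j, rfl⟩
    left
    refine ⟨Nat.le_add_right 1 _, ?_⟩
    show (0 : ℕ) = (1 + j.1 - 1) / t
    rw [Nat.add_sub_cancel_left, Nat.div_eq_of_lt j.2]

lemma nbr_mid {t : ℕ} (ht : 2 ≤ t) {i : ℕ} (h1 : 1 ≤ i) (h2 : i ≤ t)
    (pf : i ≤ t * t + t) :
    (completeFullTaryTree t 2).neighborFinset (mkv t i pf) =
      insert (mkv t 0 (Nat.zero_le _)) (Finset.image (childm t i h2) Finset.univ) := by
  ext w
  rw [SimpleGraph.mem_neighborFinset, adj_iff ht, Finset.mem_insert, Finset.mem_image]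
  simp only [Finset.mem_univ, true_and, mkv_val]
  constructor
  · rintro (⟨hw1, hw2⟩ | ⟨hi1, hw2⟩)
    · right
      have hdm := Nat.div_add_mod (w.1 - 1) t
      refine ⟨⟨(w.1 - 1) % t, Nat.mod_lt _ (by omega)⟩, ?_⟩
      apply Fin.ext
      show t * i + 1 + (w.1 - 1) % t = w.1
      rw [hw2]
      set q := t * ((w.1 - 1) / t) with hq
      omega
    · left
      apply Fin.ext
      show w.1 = 0
      rw [hw2, Nat.div_eq_of_lt (by omega)]
  · rintro (rfl | ⟨j, rfl⟩)
    · right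
      simp only [mkv_val]
      exact ⟨h1, by rw [Nat.div_eq_of_lt (by omega)]⟩
    · left
      simp only [childm, mkv_val]
      have hone : 1 ≤ t * i + 1 + j.1 :=
        le_trans (Nat.le_add_left 1 _) (Nat.le_add_right _ _)
      refine ⟨hone, ?_⟩
      rw [show t * i + 1 + j.1 - 1 = t * i + j.1 from by generalize t * i = q; omega,
        Nat.mul_add_div (by omega), Nat.div_eq_of_lt j.2, Nat.add_zero]

lemma nbr_leaf {t : ℕ} (ht : 2 ≤ t) {c : ℕ} (h1 : t + 1 ≤ c) (pf : c ≤ t * t + t) :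
    (completeFullTaryTree t 2).neighborFinset (mkv t c pf) =
      {mkv t ((c - 1) / t) (le_trans (Nat.div_le_self _ _) (le_trans (Nat.sub_le _ _) pf))} := by
  ext w
  rw [SimpleGraph.mem_neighborFinset, adj_iff ht, Finset.mem_singleton]
  simp only [mkv_val]
  constructor
  · rintro (⟨hw1, hw2⟩ | ⟨hc1, hw2⟩)
    · exfalso
      have hdm := Nat.div_add_mod (w.1 - 1) t
      rw [← hw2] at hdm
      have hc : t * (t + 1) ≤ t * c := Nat.mul_le_mul_left t h1
      have hwle := val_le w
      have hr : t * (t + 1) = t * t + t := by ring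
      obtain ⟨u, hu⟩ : ∃ u, w.1 - 1 = u := ⟨_, rfl⟩
      rw [hu] at hdm
      have h5 : u + 1 ≤ w.1 := by omega
      linarith [Nat.zero_le (u % t)]
    · apply Fin.ext
      simpa using hw2
  · rintro rfl
    right
    simp only [mkv_val]
    exact ⟨by omega, trivial⟩

end LAMaux

namespace LAMaux

def Rn (t : ℕ) : ℕ := ∑ j ∈ Finset.range t, (1 + j)

def Mn (t i : ℕ) : ℕ := lab t i + ∑ j ∈ Finset.range t, lab t (t * i + 1 + j)

lemma root_bounds {t : ℕ} (ht : 2 ≤ t) : t + 1 ≤ Rn t ∧ Rn t ≤ t * t + t := by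
  have h1 : Rn t = t + ∑ j ∈ Finset.range t, j := by
    rw [Rn, Finset.sum_add_distrib, Finset.sum_const, Finset.card_range, smul_eq_mul, mul_one]
  have h2 : 1 ≤ ∑ j ∈ Finset.range t, j :=
    Finset.single_le_sum (f := fun j => j) (fun i _ => Nat.zero_le i)
      (Finset.mem_range.mpr (by omega : (1 : ℕ) < t))
  have h3 : ∑ j ∈ Finset.range t, j ≤ t * t := by
    calc ∑ j ∈ Finset.range t, j ≤ ∑ _j ∈ Finset.range t, t :=
          Finset.sum_le_sum (fun j hj => le_of_lt (Finset.mem_range.mp hj))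
      _ = t * t := by rw [Finset.sum_const, Finset.card_range, smul_eq_mul]
  exact ⟨by linarith, by linarith⟩

lemma ws_root {t : ℕ} (ht : 2 ≤ t) :
    (completeFullTaryTree t 2).vertexSum (fl t) (mkv t 0 (Nat.zero_le _)) = ((Rn t : ℕ) : ℤ) := by
  rw [vsum_nbr, nbr_root ht, Finset.sum_image (fun a _ b _ h => by
    have hv := congrArg Fin.val h
    simp only [child0, mkv_val] at hv
    exact Fin.ext (by omega))]
  rw [Rn, Nat.cast_sum, ← Fin.sum_univ_eq_sum_range (fun j => ((1 + j : ℕ) : ℤ)) t]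
  apply Finset.sum_congr rfl
  intro j _
  rw [fl_mk]
  simp only [mkv_val, child0]
  rw [max_eq_right (Nat.zero_le _), lab_small (by have := j.2; omega)]

lemma ws_mid {t : ℕ} (ht : 2 ≤ t) {i : ℕ} (h1 : 1 ≤ i) (h2 : i ≤ t) (pf : i ≤ t * t + t) :
    (completeFullTaryTree t 2).vertexSum (fl t) (mkv t i pf) = ((Mn t i : ℕ) : ℤ) := by
  have hle : ∀ j : Fin t, i ≤ t * i + 1 + j.1 := by
    intro j
    have hi : i ≤ t * i := Nat.le_mul_of_pos_left i (by omega)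
    exact le_trans hi (le_trans (Nat.le_add_right _ 1) (Nat.le_add_right _ _))
  rw [vsum_nbr, nbr_mid ht h1 h2 pf, Finset.sum_insert (by
      intro hmem
      obtain ⟨j, _, hj⟩ := Finset.mem_image.mp hmem
      have hv := congrArg Fin.val hj
      simp only [childm, mkv_val] at hv
      exact absurd hv (by generalize t * i = q; omega)),
    Finset.sum_image (fun a _ b _ h => by
      have hv := congrArg Fin.val h
      simp only [childm, mkv_val] at hv
      exact Fin.ext (by generalize t * i = q at hv; omega))]
  rw [Mn, Nat.cast_add, Nat.cast_sum]
  congr 1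
  · rw [fl_mk]
    simp only [mkv_val]
    rw [max_eq_left (Nat.zero_le _)]
  · rw [← Fin.sum_univ_eq_sum_range (fun j => (lab t (t * i + 1 + j) : ℤ)) t]
    apply Finset.sum_congr rfl
    intro j _
    rw [fl_mk]
    simp only [childm, mkv_val]
    rw [max_eq_right (hle j)]

lemma ws_leaf {t : ℕ} (ht : 2 ≤ t) {c : ℕ} (h1 : t + 1 ≤ c) (pf : c ≤ t * t + t) :
    (completeFullTaryTree t 2).vertexSum (fl t) (mkv t c pf) = ((lab t c : ℕ) : ℤ) := by
  rw [vsum_nbr, nbr_leaf ht h1 pf, Finset.sum_singleton, fl_mk]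
  simp only [mkv_val]
  rw [max_eq_left (le_trans (Nat.div_le_self _ _) (Nat.sub_le _ _))]

lemma Mn_val {t : ℕ} (ht : 2 ≤ t) {i : ℕ} (h1 : 1 ≤ i) (h2 : i ≤ t) :
    Mn t i = (t * t + (∑ j ∈ Finset.range t, j) * t) + (i + ∑ j ∈ Finset.range t, sig t j i) := by
  rw [Mn, lab_small h2]
  rw [Finset.sum_congr rfl (fun j hj => lab_child ht h1 h2 (Finset.mem_range.mp hj))]
  rw [Finset.sum_add_distrib, Finset.sum_add_distrib, Finset.sum_const, Finset.card_range,
    smul_eq_mul, ← Finset.sum_mul]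
  ring

lemma Mn_gt {t : ℕ} (ht : 2 ≤ t) {i : ℕ} (h1 : 1 ≤ i) (h2 : i ≤ t) : t * t + t < Mn t i := by
  rw [Mn_val ht h1 h2]
  have hs := sig_sum_ge ht h1 h2
  have h0 : 0 ≤ (∑ j ∈ Finset.range t, j) * t := Nat.zero_le _
  linarith

lemma Mn_two {t : ℕ} (ht : 2 ≤ t) {i : ℕ} (h1 : 1 ≤ i) (h2 : i ≤ t) :
    Mn t i = Mn t 1 ∨ Mn t i = Mn t t := by
  rcases mid_two ht h1 h2 with h | h
  · left
    rw [Mn_val ht h1 h2, Mn_val ht (le_refl 1) (by omega), h]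
  · right
    rw [Mn_val ht h1 h2, Mn_val ht (by omega) (le_refl t), h]

def pa (t : ℕ) (c : Vt t) : Vt t :=
  ⟨(c.1 - 1) / t, lt_of_le_of_lt (le_trans (Nat.div_le_self _ _) (Nat.sub_le _ _)) c.2⟩

@[simp] lemma pa_val (t : ℕ) (c : Vt t) : (pa t c).1 = (c.1 - 1) / t := rfl

lemma pa_lt {t : ℕ} (ht : 2 ≤ t) (c : Vt t) (h : 1 ≤ c.1) : (pa t c).1 < c.1 := by
  have hd : (c.1 - 1) / t ≤ c.1 - 1 := Nat.div_le_self _ _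
  rw [pa_val]
  omega

lemma edge_eq {t : ℕ} (ht : 2 ≤ t) :
    (completeFullTaryTree t 2).edgeFinset =
      Finset.image (fun c => s(pa t c, c)) (Finset.univ.filter (fun c : Vt t => 1 ≤ c.1)) := by
  ext e
  induction e using Sym2.ind with
  | _ x y =>
    rw [SimpleGraph.mem_edgeFinset, SimpleGraph.mem_edgeSet, adj_iff ht]
    simp only [Finset.mem_image, Finset.mem_filter, Finset.mem_univ, true_and]
    constructor
    · rintro (⟨h1, h2⟩ | ⟨h1, h2⟩)
      · exact ⟨y, h1, by rw [Sym2.eq_iff]; exact Or.inl ⟨Fin.ext h2.symm, rfl⟩⟩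
      · exact ⟨x, h1, by rw [Sym2.eq_iff]; exact Or.inr ⟨Fin.ext h2.symm, rfl⟩⟩
    · rintro ⟨c, hc, he⟩
      rcases Sym2.eq_iff.mp he with ⟨ha, hb⟩ | ⟨ha, hb⟩
      · left
        subst hb
        exact ⟨hc, by rw [← ha]; rfl⟩
      · right
        subst hb
        exact ⟨hc, by rw [← ha]; rfl⟩

lemma card_edge {t : ℕ} (ht : 2 ≤ t) :
    (completeFullTaryTree t 2).edgeFinset.card = t * t + t := by
  rw [edge_eq ht, Finset.card_image_of_injOn (fun a ha b hb h => by
    rw [Finset.mem_coe, Finset.mem_filter] at ha hb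
    rcases Sym2.eq_iff.mp h with ⟨h1, h2⟩ | ⟨h1, h2⟩
    · exact h2
    · exfalso
      have ha' : (pa t a).1 < a.1 := pa_lt ht a ha.2
      have hb' : (pa t b).1 < b.1 := pa_lt ht b hb.2
      have e1 : (pa t a).1 = b.1 := congrArg Fin.val h1
      have e2 : a.1 = (pa t b).1 := congrArg Fin.val h2
      omega)]
  have hfe : Finset.univ.filter (fun c : Vt t => 1 ≤ c.1) =
      Finset.univ.erase (mkv t 0 (Nat.zero_le _)) := by
    ext c
    simp only [Finset.mem_filter, Finset.mem_univ, true_and, Finset.mem_erase, and_true]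
    rw [Ne, Fin.ext_iff, mkv_val]
    omega
  rw [hfe, Finset.card_erase_of_mem (Finset.mem_univ _), Finset.card_univ, Fintype.card_fin,
    Nval]
  exact Nat.succ_sub_one _

end LAMaux

open LAMaux

/-- For every `t ≥ 2`, the local antimagic chromatic number of the complete full
`t`-ary tree of depth `2` is at most `l + 2`, where `l = t²` is its number of
leaves. -/
theorem localAntimagicChromaticNumber_completeFullTaryTree_depth_two
    (t : ℕ) (ht : 2 ≤ t) :
    (completeFullTaryTree t 2).localAntimagicChromaticNumber ≤ t ^ 2 + 2 := by
  have pf1 : (1 : ℕ) ≤ t * t + t := le_trans (by omega) (Nat.le_add_left t (t * t))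
  have pft : t ≤ t * t + t := Nat.le_add_left t (t * t)
  have hcard := card_edge ht
  -- the bijectivity part
  have hbij : Set.BijOn (fl t) ↑(completeFullTaryTree t 2).edgeFinset
      (Set.Icc 1 ((completeFullTaryTree t 2).edgeFinset.card : ℤ)) := by
    rw [hcard]
    refine ⟨?_, ?_, ?_⟩
    · intro e he
      rw [Finset.mem_coe, edge_eq ht, Finset.mem_image] at he
      obtain ⟨c, hc, rfl⟩ := he
      rw [Finset.mem_filter] at hc
      have hc1 : 1 ≤ c.1 := hc.2
      rw [fl_mk, max_eq_right (le_of_lt (pa_lt ht c hc1)), Set.mem_Icc]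
      obtain ⟨hm1, hm2⟩ := lab_mem ht hc1 (val_le c)
      exact ⟨by exact_mod_cast hm1, by exact_mod_cast hm2⟩
    · intro e he e' he' hfe
      rw [Finset.mem_coe, edge_eq ht, Finset.mem_image] at he he'
      obtain ⟨c, hc, rfl⟩ := he
      obtain ⟨c', hc', rfl⟩ := he'
      rw [Finset.mem_filter] at hc hc'
      rw [fl_mk, fl_mk, max_eq_right (le_of_lt (pa_lt ht c hc.2)),
        max_eq_right (le_of_lt (pa_lt ht c' hc'.2))] at hfe
      have hll : lab t c.1 = lab t c'.1 := Nat.cast_inj.mp hfe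
      have hcc : c.1 = c'.1 := lab_injOn ht c.1 (Finset.mem_Icc.mpr ⟨hc.2, val_le c⟩)
        c'.1 (Finset.mem_Icc.mpr ⟨hc'.2, val_le c'⟩) hll
      rw [Fin.ext hcc]
    · intro k hk
      rw [Set.mem_Icc] at hk
      obtain ⟨m, hm⟩ : ∃ m, m = t * t + t := ⟨_, rfl⟩
      rw [← hm] at hk
      have hkn : 1 ≤ k.toNat ∧ k.toNat ≤ m ∧ k = (k.toNat : ℤ) := by omega
      obtain ⟨hkn1, hkn2, hkeq⟩ := hkn
      have hmem : k.toNat ∈ Finset.image (lab t) (Finset.Icc 1 (t * t + t)) := by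
        rw [lab_image ht]
        exact Finset.mem_Icc.mpr ⟨hkn1, by omega⟩
      obtain ⟨c, hcmem, hlab⟩ := Finset.mem_image.mp hmem
      rw [Finset.mem_Icc] at hcmem
      refine ⟨s(pa t (mkv t c hcmem.2), mkv t c hcmem.2), ?_, ?_⟩
      · rw [Finset.mem_coe, edge_eq ht, Finset.mem_image]
        exact ⟨mkv t c hcmem.2, Finset.mem_filter.mpr ⟨Finset.mem_univ _, hcmem.1⟩, rfl⟩
      · rw [fl_mk, max_eq_right (le_of_lt (pa_lt ht (mkv t c hcmem.2) hcmem.1))]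
        rw [mkv_val, hlab]
        exact hkeq.symm
  -- adjacent vertices get distinct sums
  have key : ∀ w v : Vt t, 1 ≤ v.1 → w.1 = (v.1 - 1) / t →
      (completeFullTaryTree t 2).vertexSum (fl t) w ≠
        (completeFullTaryTree t 2).vertexSum (fl t) v := by
    intro w v hv1 hw
    rcases le_or_gt v.1 t with hvt | hvt
    · have hw0 : w.1 = 0 := by rw [hw]; exact Nat.div_eq_of_lt (by omega)
      have hwe : w = mkv t 0 (Nat.zero_le _) := Fin.ext hw0
      have hve : v = mkv t v.1 (val_le v) := Fin.ext rfl
      have e1 : (completeFullTaryTree t 2).vertexSum (fl t) w = ((Rn t : ℕ) : ℤ) := by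
        rw [hwe]; exact ws_root ht
      have e2 : (completeFullTaryTree t 2).vertexSum (fl t) v = ((Mn t v.1 : ℕ) : ℤ) := by
        rw [hve]; exact ws_mid ht hv1 hvt (val_le v)
      rw [e1, e2]
      intro hEq
      have heq : Rn t = Mn t v.1 := Nat.cast_inj.mp hEq
      obtain ⟨_, hb2⟩ := root_bounds ht
      have hg := Mn_gt ht hv1 hvt
      linarith
    · obtain ⟨hi1, hit, hjt, hrep⟩ := child_decomp ht (by omega) (val_le v)
      have hwe : w = mkv t ((v.1 - 1) / t) (le_trans hit (Nat.le_add_left t (t * t))) :=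
        Fin.ext hw
      have hve : v = mkv t v.1 (val_le v) := Fin.ext rfl
      have e1 : (completeFullTaryTree t 2).vertexSum (fl t) w
          = ((Mn t ((v.1 - 1) / t) : ℕ) : ℤ) := by
        rw [hwe]; exact ws_mid ht hi1 hit _
      have e2 : (completeFullTaryTree t 2).vertexSum (fl t) v = ((lab t v.1 : ℕ) : ℤ) := by
        rw [hve]; exact ws_leaf ht (by omega) (val_le v)
      rw [e1, e2]
      intro hEq
      have heq : Mn t ((v.1 - 1) / t) = lab t v.1 := Nat.cast_inj.mp hEq
      have hg := Mn_gt ht hi1 hit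
      have hl := (lab_big ht (by omega) (val_le v)).2
      linarith
  have hdist : ∀ u v : Vt t, (completeFullTaryTree t 2).Adj u v →
      (completeFullTaryTree t 2).vertexSum (fl t) u ≠
        (completeFullTaryTree t 2).vertexSum (fl t) v := by
    intro u v hadj
    rcases (adj_iff ht u v).mp hadj with ⟨h1, h2⟩ | ⟨h1, h2⟩
    · exact key u v h1 h2
    · exact (key v u h1 h2).symm
  -- color count
  have hcount : (completeFullTaryTree t 2).sumColorCount (fl t) ≤ t * t + 2 := by
    have hsub : Finset.univ.image ((completeFullTaryTree t 2).vertexSum (fl t)) ⊆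
        Finset.Icc ((t : ℤ) + 1) ((t * t + t : ℕ) : ℤ) ∪
          {(completeFullTaryTree t 2).vertexSum (fl t) (mkv t 1 pf1),
            (completeFullTaryTree t 2).vertexSum (fl t) (mkv t t pft)} := by
      intro x hx
      obtain ⟨v, _, rfl⟩ := Finset.mem_image.mp hx
      rcases Nat.lt_or_ge v.1 1 with hv | hv
      · have hv0 : v.1 = 0 := by omega
        have hve : v = mkv t 0 (Nat.zero_le _) := Fin.ext hv0
        have e2 : (completeFullTaryTree t 2).vertexSum (fl t) v = ((Rn t : ℕ) : ℤ) := by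
          rw [hve]; exact ws_root ht
        rw [e2]
        apply Finset.mem_union_left
        rw [Finset.mem_Icc]
        obtain ⟨hb1, hb2⟩ := root_bounds ht
        exact ⟨by exact_mod_cast hb1, by exact_mod_cast hb2⟩
      · rcases le_or_gt v.1 t with hvt | hvt
        · have hve : v = mkv t v.1 (val_le v) := Fin.ext rfl
          have e2 : (completeFullTaryTree t 2).vertexSum (fl t) v = ((Mn t v.1 : ℕ) : ℤ) := by
            rw [hve]; exact ws_mid ht hv hvt (val_le v)
          rw [e2]
          apply Finset.mem_union_right
          rcases Mn_two ht hv hvt with h | h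
          · apply Finset.mem_insert.mpr
            left
            rw [ws_mid ht (le_refl 1) (by omega) pf1]
            exact Nat.cast_inj.mpr h
          · apply Finset.mem_insert.mpr
            right
            apply Finset.mem_singleton.mpr
            rw [ws_mid ht (by omega) (le_refl t) pft]
            exact Nat.cast_inj.mpr h
        · have hve : v = mkv t v.1 (val_le v) := Fin.ext rfl
          have e2 : (completeFullTaryTree t 2).vertexSum (fl t) v = ((lab t v.1 : ℕ) : ℤ) := by
            rw [hve]; exact ws_leaf ht (by omega) (val_le v)
          rw [e2]
          apply Finset.mem_union_left
          rw [Finset.mem_Icc]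
          obtain ⟨hb1, hb2⟩ := lab_big ht (by omega) (val_le v)
          exact ⟨by exact_mod_cast hb1, by exact_mod_cast hb2⟩
    have hIcc : (Finset.Icc ((t : ℤ) + 1) ((t * t + t : ℕ) : ℤ)).card = t * t := by
      rw [Int.card_Icc]
      have he : ((t * t + t : ℕ) : ℤ) + 1 - ((t : ℤ) + 1) = ((t * t : ℕ) : ℤ) := by
        push_cast
        ring
      rw [he, Int.toNat_natCast]
    have hpair : ({(completeFullTaryTree t 2).vertexSum (fl t) (mkv t 1 pf1),
        (completeFullTaryTree t 2).vertexSum (fl t) (mkv t t pft)} : Finset ℤ).card ≤ 2 := by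
      apply le_trans (Finset.card_insert_le _ _)
      rw [Finset.card_singleton]
    calc (completeFullTaryTree t 2).sumColorCount (fl t)
        = (Finset.univ.image ((completeFullTaryTree t 2).vertexSum (fl t))).card := rfl
      _ ≤ _ := Finset.card_le_card hsub
      _ ≤ _ + _ := Finset.card_union_le _ _
      _ ≤ t * t + 2 := by rw [hIcc]; exact Nat.add_le_add_left hpair _
  have hmem : (completeFullTaryTree t 2).sumColorCount (fl t) ∈
      {c | ∃ f, (completeFullTaryTree t 2).IsLocalAntimagicLabeling f ∧
        (completeFullTaryTree t 2).sumColorCount f = c} := ⟨fl t, ⟨hbij, hdist⟩, rfl⟩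
  have hinf := Nat.sInf_le hmem
  have hp : t * t = t ^ 2 := (pow_two t).symm
  rw [SimpleGraph.localAntimagicChromaticNumber]
  rw [hp] at hcount
  exact le_trans hinf hcount
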